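/- Let δ > 0 and u, v ∈ ℂ. It is impossible that the inequality |(δ² v − u²) − 2 u δ e^{iθ} − δ² e^{2iθ}| < δ² holds for all θ ∈ [−π, π]. -/

import Mathlib

open Real

/-- **Parseval step in the Duren–Rudin counterexample.** For `δ > 0` and `u, v ∈ ℂ`,
the inequality `|(δ²v - u²) - 2uδ e^{iθ} - δ² e^{2iθ}| < δ²` cannot hold for all
`θ ∈ [-π, π]`. -/
theorem duren_rudin_parseval (δ : ℝ) (hδ : 0 < δ) (u v : ℂ) :
    ¬ ∀ θ ∈ Set.Icc (-π) π,
      ‖((δ : ℂ) ^ 2 * v - u ^ 2) - 2 * u * (δ : ℂ) * Complex.exp (θ * Complex.I)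
        - (δ : ℂ) ^ 2 * Complex.exp (2 * θ * Complex.I)‖ < δ ^ 2 := by
  intro h
  have hπ : (0:ℝ) < π := Real.pi_pos
  have h0 := h 0 ⟨by linarith, by linarith⟩
  have h1 := h π ⟨by linarith, le_refl _⟩
  have h2 := h (π/2) ⟨by linarith, by linarith⟩
  have h3 := h (-(π/2)) ⟨by linarith, by linarith⟩
  set a₀ : ℂ := (δ : ℂ) ^ 2 * v - u ^ 2 with ha₀
  have e0 : Complex.exp ((0:ℝ) * Complex.I) = 1 := by norm_num
  have e00 : Complex.exp (2 * (0:ℝ) * Complex.I) = 1 := by norm_num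
  have e1 : Complex.exp ((π:ℝ) * Complex.I) = -1 := by
    exact_mod_cast Complex.exp_pi_mul_I
  have e11 : Complex.exp (2 * (π:ℝ) * Complex.I) = 1 := by
    have : (2 * (π:ℝ) : ℂ) * Complex.I = 2 * π * Complex.I := by push_cast; ring
    rw [this]; exact_mod_cast Complex.exp_two_pi_mul_I
  have e2 : Complex.exp ((↑(π/2) : ℂ) * Complex.I) = Complex.I := by
    rw [Complex.exp_mul_I]
    push_cast
    simp [Complex.cos_pi_div_two, Complex.sin_pi_div_two]
  have e22 : Complex.exp (2 * (↑(π/2) : ℂ) * Complex.I) = -1 := by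
    have : (2 * (↑(π/2) : ℂ)) * Complex.I = (π:ℂ) * Complex.I := by push_cast; ring
    rw [this]; exact_mod_cast Complex.exp_pi_mul_I
  have e3 : Complex.exp ((↑(-(π/2)) : ℂ) * Complex.I) = -Complex.I := by
    rw [Complex.exp_mul_I]
    push_cast
    simp [Complex.cos_pi_div_two, Complex.sin_pi_div_two]
  have e33 : Complex.exp (2 * (↑(-(π/2)) : ℂ) * Complex.I) = -1 := by
    have : (2 * (↑(-(π/2)) : ℂ)) * Complex.I = -((π:ℂ) * Complex.I) := by push_cast; ring
    rw [this, Complex.exp_neg, Complex.exp_pi_mul_I]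
    norm_num
  rw [e0, e00] at h0
  rw [e1, e11] at h1
  rw [e2, e22] at h2
  rw [e3, e33] at h3
  -- A + B - C - D = -4δ²
  set A : ℂ := a₀ - 2 * u * (δ:ℂ) * 1 - (δ:ℂ)^2 * 1 with hA
  set B : ℂ := a₀ - 2 * u * (δ:ℂ) * (-1) - (δ:ℂ)^2 * 1 with hB
  set C : ℂ := a₀ - 2 * u * (δ:ℂ) * Complex.I - (δ:ℂ)^2 * (-1) with hC
  set D : ℂ := a₀ - 2 * u * (δ:ℂ) * (-Complex.I) - (δ:ℂ)^2 * (-1) with hD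
  have key : A + B - C - D = -4 * (δ:ℂ)^2 := by
    rw [hA, hB, hC, hD]; ring
  have habs : ‖A + B - C - D‖ = 4 * δ^2 := by
    rw [key]
    rw [show (-4 * (δ:ℂ)^2) = ((-4 * δ^2 : ℝ) : ℂ) by push_cast; ring]
    rw [Complex.norm_real, Real.norm_eq_abs, abs_of_nonpos (by nlinarith [sq_nonneg δ])]
    ring
  have tri : ‖A + B - C - D‖
      ≤ ‖A‖ + ‖B‖ + ‖C‖ + ‖D‖ := by
    calc ‖A + B - C - D‖
        ≤ ‖A + B - C‖ + ‖D‖ := by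
          simpa using norm_sub_le (A + B - C) D
      _ ≤ ‖A + B‖ + ‖C‖ + ‖D‖ := by
          have := norm_sub_le (A + B) C
          linarith
      _ ≤ ‖A‖ + ‖B‖ + ‖C‖ + ‖D‖ := by
          have := norm_add_le A B
          linarith
  linarith [habs, tri, h0, h1, h2, h3]
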